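/- Let ψ be an endomorphism of F' = F * ⟨c⟩ (free product with an infinite cyclic group generated by c) such that ψ(F) ⊆ F and ψ(c) = yc for some y ∈ F. Then for every k ∈ ℕ, Im(ψ^k) ∩ Fc ⊆ ψ^k(Fc); that is, every element of the coset Fc that lies in the image of ψ^k is the image under ψ^k of an element of Fc. -/

import Mathlib

open SemidirectProduct

namespace Stmt19Aux

abbrev GG (X : Type*) := FreeGroup (X × ℤ)
abbrev FG (X : Type*) := FreeGroup (Option X)

def shift {X : Type*} (n : ℤ) : MulAut (GG X) :=
  FreeGroup.freeGroupCongr (Equiv.prodCongr (Equiv.refl X) (Equiv.addRight n))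

lemma shift_of {X : Type*} (n : ℤ) (p : X × ℤ) :
    shift n (FreeGroup.of p) = FreeGroup.of (p.1, p.2 + n) := by
  simp [shift, Prod.map]

def φz (X : Type*) : Multiplicative ℤ →* MulAut (GG X) :=
  MonoidHom.mk' (fun t => shift t.toAdd) (by
    intro a b
    apply MulEquiv.toMonoidHom_injective
    apply FreeGroup.ext_hom
    intro p
    show shift _ (FreeGroup.of p) = shift _ (shift _ (FreeGroup.of p))
    simp only [toAdd_mul, MulAut.mul_apply, shift_of]
    ring_nf)

lemma φz_of {X : Type*} (t : Multiplicative ℤ) (p : X × ℤ) :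
    φz X t (FreeGroup.of p) = FreeGroup.of (p.1, p.2 + t.toAdd) := by
  simp [φz, shift_of, MonoidHom.mk'_apply]

abbrev HH (X : Type*) := GG X ⋊[φz X] Multiplicative ℤ

def Φ (X : Type*) : FG X →* HH X :=
  FreeGroup.lift fun a => match a with
    | some x => inl (FreeGroup.of (x, (0 : ℤ)))
    | none => inr (Multiplicative.ofAdd 1)

def cpow (X : Type*) : Multiplicative ℤ →* FG X :=
  zpowersHom _ (FreeGroup.of (none : Option X))

def θ (X : Type*) : GG X →* FG X :=
  FreeGroup.lift fun p =>
    FreeGroup.of (none : Option X) ^ p.2 * FreeGroup.of (some p.1) *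
      FreeGroup.of (none : Option X) ^ (-p.2)

lemma θ_of {X : Type*} (p : X × ℤ) :
    θ X (FreeGroup.of p) =
      FreeGroup.of (none : Option X) ^ p.2 * FreeGroup.of (some p.1) *
        FreeGroup.of (none : Option X) ^ (-p.2) :=
  FreeGroup.lift_apply_of

lemma Φ_some {X : Type*} (x : X) :
    Φ X (FreeGroup.of (some x)) = inl (FreeGroup.of (x, (0 : ℤ))) :=
  FreeGroup.lift_apply_of

lemma Φ_none {X : Type*} :
    Φ X (FreeGroup.of (none : Option X)) = inr (Multiplicative.ofAdd 1) :=
  FreeGroup.lift_apply_of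

lemma compatXi (X : Type*) : ∀ t, (θ X).comp ((φz X) t).toMonoidHom =
    (MulAut.conj (cpow X t)).toMonoidHom.comp (θ X) := by
  intro t
  apply FreeGroup.ext_hom
  intro p
  simp only [MonoidHom.comp_apply, MulEquiv.coe_toMonoidHom, φz_of, θ_of, MulAut.conj_apply,
    cpow, zpowersHom_apply]
  group

def Ξ (X : Type*) : HH X →* FG X := SemidirectProduct.lift (θ X) (cpow X) (compatXi X)

lemma Ξ_Φ (X : Type*) : (Ξ X).comp (Φ X) = MonoidHom.id _ := by
  apply FreeGroup.ext_hom
  intro a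
  cases a with
  | some x => simp [Φ_some, Ξ, θ_of]
  | none => simp [Φ_none, Ξ, cpow]

lemma Φ_injective (X : Type*) : Function.Injective (Φ X) := by
  intro a b h
  have h1 := DFunLike.congr_fun (Ξ_Φ X) a
  have h2 := DFunLike.congr_fun (Ξ_Φ X) b
  simp only [MonoidHom.comp_apply, MonoidHom.id_apply] at h1 h2
  rw [← h1, ← h2, h]

lemma Φ_θ (X : Type*) : (Φ X).comp (θ X) = inl := by
  apply FreeGroup.ext_hom
  intro p
  simp only [MonoidHom.comp_apply, θ_of, map_mul, map_zpow, Φ_some, Φ_none]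
  rw [zpow_neg, ← map_zpow inr, ← map_inv, ← inl_aut]
  congr 1
  rw [φz_of]
  simp [toAdd_zpow]

def G0 (X : Type*) : Subgroup (GG X) :=
  Subgroup.closure (Set.range fun x : X => FreeGroup.of (x, (0 : ℤ)))

def Fdef (X : Type*) : Subgroup (FG X) :=
  Subgroup.closure (Set.range fun x : X => FreeGroup.of (some x))

def rr (X : Type*) : GG X →* GG X :=
  FreeGroup.lift fun p => if p.2 = 0 then FreeGroup.of p else 1

lemma rr_of {X : Type*} (p : X × ℤ) :
    rr X (FreeGroup.of p) = if p.2 = 0 then FreeGroup.of p else 1 :=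
  FreeGroup.lift_apply_of

lemma rr_fix {X : Type*} : ∀ g ∈ G0 X, rr X g = g := by
  intro g hg
  refine MonoidHom.eqOn_closure (f := rr X) (g := MonoidHom.id _) ?_ hg
  rintro _ ⟨x, rfl⟩
  simp [rr_of]

lemma rr_kill {X : Type*} {t : Multiplicative ℤ} (ht : t.toAdd ≠ 0) :
    ∀ g ∈ G0 X, rr X (φz X t g) = 1 := by
  intro g hg
  refine MonoidHom.eqOn_closure (f := (rr X).comp (φz X t).toMonoidHom) (g := 1) ?_ hg
  rintro _ ⟨x, rfl⟩
  simp [φz_of, rr_of, ht]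

lemma rr_mem {X : Type*} (g : GG X) : rr X g ∈ G0 X := by
  have h : (rr X).range ≤ G0 X := by
    rw [rr, FreeGroup.range_lift_eq_closure]
    refine (Subgroup.closure_le _).2 ?_
    rintro _ ⟨⟨x, n⟩, rfl⟩
    dsimp only
    by_cases hn : n = 0
    · subst hn
      rw [if_pos rfl]
      exact Subgroup.subset_closure ⟨x, rfl⟩
    · rw [if_neg hn]
      exact one_mem _
  exact h ⟨g, rfl⟩

lemma θ_G0 {X : Type*} : ∀ g ∈ G0 X, θ X g ∈ Fdef X := by
  intro g hg
  have h : G0 X ≤ Subgroup.comap (θ X) (Fdef X) := by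
    rw [G0]
    refine (Subgroup.closure_le _).2 ?_
    rintro _ ⟨x, rfl⟩
    have hx : FreeGroup.of (some x) ∈ Fdef X := by
      rw [Fdef]
      exact Subgroup.subset_closure ⟨x, rfl⟩
    simp only [Subgroup.mem_comap, θ_of, SetLike.mem_coe]
    simpa using hx
  exact h hg

lemma Φ_θ_ap {X : Type*} (g : GG X) : Φ X (θ X g) = inl g := by
  have := DFunLike.congr_fun (Φ_θ X) g
  simpa using this

lemma eq_inl {X : Type*} (h : HH X) (hr : rightHom h = 1) : inl h.left = h := by
  conv_rhs => rw [← inl_left_mul_inr_right h]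
  have : h.right = 1 := hr
  rw [this]
  simp

section Psi

variable {X : Type*} (ψ : FG X →* FG X) (y : FG X)

lemma LF : ∀ f ∈ Fdef X, ∃ g ∈ G0 X, Φ X f = inl g := by
  intro f hf
  have h : Fdef X ≤ Subgroup.comap (Φ X) ((G0 X).map inl) := by
    rw [Fdef]
    refine (Subgroup.closure_le _).2 ?_
    rintro _ ⟨x, rfl⟩
    refine Subgroup.mem_comap.2 ?_
    rw [Φ_some]
    exact Subgroup.mem_map_of_mem _ (Subgroup.subset_closure ⟨x, rfl⟩)
  obtain ⟨g, hg, hfg⟩ := Subgroup.mem_map.1 (h hf)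
  exact ⟨g, hg, hfg.symm⟩

def ψ' : GG X →* GG X :=
  FreeGroup.lift fun p => (Φ X (ψ (θ X (FreeGroup.of p)))).left

lemma ψ'_of (p : X × ℤ) : ψ' ψ (FreeGroup.of p) = (Φ X (ψ (θ X (FreeGroup.of p)))).left :=
  FreeGroup.lift_apply_of

lemma rightΦψ (hXF : ∀ x : X, ψ (FreeGroup.of (some x)) ∈ Fdef X)
    (hy : y ∈ Fdef X) (hc : ψ (FreeGroup.of none) = y * FreeGroup.of none) :
    rightHom.comp ((Φ X).comp ψ) = rightHom.comp (Φ X) := by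
  apply FreeGroup.ext_hom
  intro a
  cases a with
  | some x =>
    obtain ⟨g, hg, h⟩ := LF _ (hXF x)
    simp [MonoidHom.comp_apply, h, Φ_some]
  | none =>
    obtain ⟨gy, hgy, hyy⟩ := LF _ hy
    simp [MonoidHom.comp_apply, hc, map_mul, hyy, Φ_none]

lemma Φψθ (hXF : ∀ x : X, ψ (FreeGroup.of (some x)) ∈ Fdef X)
    (hy : y ∈ Fdef X) (hc : ψ (FreeGroup.of none) = y * FreeGroup.of none) :
    (Φ X).comp (ψ.comp (θ X)) = inl.comp (ψ' ψ) := by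
  apply FreeGroup.ext_hom
  intro p
  simp only [MonoidHom.comp_apply, ψ'_of]
  refine (eq_inl _ ?_).symm
  have h1 := DFunLike.congr_fun (rightΦψ ψ y hXF hy hc) (θ X (FreeGroup.of p))
  simp only [MonoidHom.comp_apply] at h1
  rw [h1, Φ_θ_ap]
  exact rightHom_inl _

lemma compatPsi (hXF : ∀ x : X, ψ (FreeGroup.of (some x)) ∈ Fdef X)
    (hy : y ∈ Fdef X) (hc : ψ (FreeGroup.of none) = y * FreeGroup.of none) :
    ∀ t, (inl.comp (ψ' ψ)).comp ((φz X) t).toMonoidHom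
      = (MulAut.conj (((Φ X).comp (ψ.comp (cpow X))) t)).toMonoidHom.comp
          (inl.comp (ψ' ψ)) := by
  intro t
  apply FreeGroup.ext_hom
  intro p
  have key : ∀ q : X × ℤ, Φ X (ψ (θ X (FreeGroup.of q))) = inl (ψ' ψ (FreeGroup.of q)) := by
    intro q
    have := DFunLike.congr_fun (Φψθ ψ y hXF hy hc) (FreeGroup.of q)
    simpa using this
  simp only [MonoidHom.comp_apply, MulEquiv.coe_toMonoidHom, MulAut.conj_apply, φz_of,
    ← key]
  have hcp : cpow X t = FreeGroup.of (none : Option X) ^ t.toAdd := rfl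
  rw [hcp, ← map_inv (Φ X), ← map_mul, ← map_mul, ← map_inv ψ, ← map_mul, ← map_mul]
  congr 2
  simp only [θ_of]
  group

def Ψm (hXF : ∀ x : X, ψ (FreeGroup.of (some x)) ∈ Fdef X)
    (hy : y ∈ Fdef X) (hc : ψ (FreeGroup.of none) = y * FreeGroup.of none) :
    HH X →* HH X :=
  SemidirectProduct.lift (inl.comp (ψ' ψ)) ((Φ X).comp (ψ.comp (cpow X)))
    (compatPsi ψ y hXF hy hc)

lemma ΦψΨ (hXF : ∀ x : X, ψ (FreeGroup.of (some x)) ∈ Fdef X)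
    (hy : y ∈ Fdef X) (hc : ψ (FreeGroup.of none) = y * FreeGroup.of none) :
    (Φ X).comp ψ = (Ψm ψ y hXF hy hc).comp (Φ X) := by
  apply FreeGroup.ext_hom
  intro a
  have key : ∀ q : X × ℤ, Φ X (ψ (θ X (FreeGroup.of q))) = inl (ψ' ψ (FreeGroup.of q)) := by
    intro q
    have := DFunLike.congr_fun (Φψθ ψ y hXF hy hc) (FreeGroup.of q)
    simpa using this
  cases a with
  | some x =>
    have hθ : θ X (FreeGroup.of ((x, 0) : X × ℤ)) = FreeGroup.of (some x) := by
      simp [θ_of]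
    simp only [MonoidHom.comp_apply, Φ_some, Ψm, lift_inl, ← key, hθ]
  | none =>
    simp only [MonoidHom.comp_apply, Φ_none, Ψm, lift_inr]
    have : cpow X (Multiplicative.ofAdd 1) = FreeGroup.of (none : Option X) := by
      simp [cpow]
    rw [this]

lemma ψθ (hXF : ∀ x : X, ψ (FreeGroup.of (some x)) ∈ Fdef X)
    (hy : y ∈ Fdef X) (hc : ψ (FreeGroup.of none) = y * FreeGroup.of none) :
    ∀ g, ψ (θ X g) = θ X (ψ' ψ g) := by
  intro g
  apply Φ_injective X
  have h1 := DFunLike.congr_fun (ΦψΨ ψ y hXF hy hc) (θ X g)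
  simp only [MonoidHom.comp_apply] at h1
  rw [h1, Φ_θ_ap, Ψm, lift_inl, Φ_θ_ap]
  rfl

lemma conj_inl_left (h : HH X) (g : GG X) :
    (h * inl g * h⁻¹).left = h.left * φz X h.right g * h.left⁻¹ := by
  simp only [mul_left, mul_right, inv_left, left_inl, right_inl, mul_one, map_mul, map_inv]
  simp [mul_assoc]

lemma right_u (hy : y ∈ Fdef X) (hc : ψ (FreeGroup.of none) = y * FreeGroup.of none) :
    rightHom (Φ X (ψ (FreeGroup.of none))) = Multiplicative.ofAdd 1 := by
  obtain ⟨gy, hgy, hyy⟩ := LF _ hy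
  rw [hc, map_mul, map_mul, hyy, Φ_none]
  simp

lemma rψ' (hXF : ∀ x : X, ψ (FreeGroup.of (some x)) ∈ Fdef X)
    (hy : y ∈ Fdef X) (hc : ψ (FreeGroup.of none) = y * FreeGroup.of none) :
    (rr X).comp (ψ' ψ) = (ψ' ψ).comp (rr X) := by
  apply FreeGroup.ext_hom
  rintro ⟨x, n⟩
  simp only [MonoidHom.comp_apply, rr_of]
  by_cases hn : n = 0
  · subst hn
    rw [if_pos rfl]
    have hθ : θ X (FreeGroup.of ((x, (0:ℤ)) : X × ℤ)) = FreeGroup.of (some x) := by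
      simp [θ_of]
    obtain ⟨g, hg, hΦ⟩ := LF _ (hXF x)
    rw [ψ'_of, hθ, hΦ, left_inl]
    exact rr_fix g hg
  · rw [if_neg hn, map_one]
    obtain ⟨gx, hgx, hΦx⟩ := LF _ (hXF x)
    have hθ : θ X (FreeGroup.of ((x, n) : X × ℤ)) =
        FreeGroup.of (none : Option X) ^ n * FreeGroup.of (some x) *
          FreeGroup.of (none : Option X) ^ (-n) := θ_of _
    rw [ψ'_of, hθ, map_mul, map_mul, map_zpow, map_zpow, map_mul, map_mul, map_zpow,
      map_zpow, hΦx, zpow_neg]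
    set u := Φ X (ψ (FreeGroup.of (none : Option X))) with hu
    rw [conj_inl_left, map_mul, map_mul, map_inv]
    have hright : (u ^ n).right = Multiplicative.ofAdd 1 ^ n := by
      have : (u ^ n).right = rightHom (u ^ n) := rfl
      rw [this, map_zpow, right_u ψ y hy hc]
    have hmid : rr X (φz X ((u ^ n).right) gx) = 1 := by
      refine rr_kill ?_ gx hgx
      rw [hright]
      simpa [toAdd_zpow] using hn
    rw [hmid, mul_one, mul_inv_cancel]

lemma core (hXF : ∀ x : X, ψ (FreeGroup.of (some x)) ∈ Fdef X)
    (hy : y ∈ Fdef X) (hc : ψ (FreeGroup.of none) = y * FreeGroup.of none)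
    (v : FG X) (hv : ψ v ∈ Fdef X) : ∃ g ∈ Fdef X, ψ g = ψ v := by
  obtain ⟨w, hwG0, hΦw⟩ := LF _ hv
  have hr : rightHom (Φ X v) = 1 := by
    have h1 := DFunLike.congr_fun (rightΦψ ψ y hXF hy hc) v
    simp only [MonoidHom.comp_apply] at h1
    rw [← h1, hΦw, rightHom_inl]
  have hvθ : v = θ X ((Φ X v).left) := by
    have h2 := eq_inl (Φ X v) hr
    have h3 := DFunLike.congr_fun (Ξ_Φ X) v
    simp only [MonoidHom.comp_apply, MonoidHom.id_apply] at h3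
    conv_lhs => rw [← h3, ← h2]
    rw [Ξ, lift_inl]
  set gv := (Φ X v).left with hgv
  have h4 : ψ v = θ X (ψ' ψ gv) := by
    conv_lhs => rw [hvθ]
    exact ψθ ψ y hXF hy hc gv
  have h5 : ψ' ψ gv = w := by
    have h7 : (inl (ψ' ψ gv) : HH X) = inl w := by
      rw [← Φ_θ_ap (ψ' ψ gv), ← h4, hΦw]
    have h8 := congrArg SemidirectProduct.left h7
    simpa using h8
  refine ⟨θ X (rr X gv), θ_G0 _ (rr_mem gv), ?_⟩
  rw [ψθ ψ y hXF hy hc (rr X gv)]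
  have h6 := DFunLike.congr_fun (rψ' ψ y hXF hy hc) gv
  simp only [MonoidHom.comp_apply] at h6
  rw [← h6, h5, rr_fix w hwG0, ← h5, ← h4]

end Psi

end Stmt19Aux

open Stmt19Aux

theorem stmt19 (X : Type*) (ψ : FreeGroup (Option X) →* FreeGroup (Option X))
    (F : Subgroup (FreeGroup (Option X)))
    (hF : F = Subgroup.closure (Set.range fun x : X => FreeGroup.of (some x)))
    (hX : ∀ x : X, ψ (FreeGroup.of (some x)) ∈ F)
    (y : FreeGroup (Option X)) (hy : y ∈ F)
    (hc : ψ (FreeGroup.of none) = y * FreeGroup.of none) :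
    ∀ k : ℕ, ∀ z : FreeGroup (Option X),
      z ∈ Set.range ((⇑ψ)^[k]) → (∃ f ∈ F, z = f * FreeGroup.of none) →
      ∃ w : FreeGroup (Option X),
        (∃ f ∈ F, w = f * FreeGroup.of none) ∧ (⇑ψ)^[k] w = z := by
  have hFd : F = Fdef X := by rw [hF]; rfl
  subst hFd
  intro k z hz hzc
  obtain ⟨u, hu⟩ := hz
  obtain ⟨f, hfF, hzf⟩ := hzc
  have hFinv : ∀ g ∈ Fdef X, ψ g ∈ Fdef X := by
    intro g hg
    have hle : Fdef X ≤ Subgroup.comap ψ (Fdef X) := by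
      rw [Fdef]
      refine (Subgroup.closure_le _).2 ?_
      rintro _ ⟨x, rfl⟩
      exact Subgroup.mem_comap.2 (hX x)
    exact hle hg
  have hQ : ∀ m : ℕ, ∀ g ∈ Fdef X, (⇑ψ)^[m] g ∈ Fdef X := by
    intro m
    induction m with
    | zero => intro g hg; simpa using hg
    | succ m ih =>
      intro g hg
      rw [Function.iterate_succ_apply]
      exact ih _ (hFinv g hg)
  obtain ⟨yk, hykF, hck⟩ : ∃ yk ∈ Fdef X,
      (⇑ψ)^[k] (FreeGroup.of (none : Option X)) = yk * FreeGroup.of none := by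
    clear hu hzf
    induction k with
    | zero => exact ⟨1, one_mem _, by simp⟩
    | succ m ih =>
      obtain ⟨ym, hymF, hcm⟩ := ih
      refine ⟨ψ ym * y, mul_mem (hFinv _ hymF) hy, ?_⟩
      rw [Function.iterate_succ_apply', hcm, map_mul, hc, mul_assoc]
  set ψe : Monoid.End (FreeGroup (Option X)) := ψ with hψe
  set χ : Monoid.End (FreeGroup (Option X)) := ψe ^ k with hχdef
  have hcoe : (⇑ψ)^[k] = ⇑χ := rfl
  have hχu : χ u = z := by rw [← hcoe]; exact hu
  have hχc : χ (FreeGroup.of (none : Option X)) = yk * FreeGroup.of none := by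
    rw [← hcoe]; exact hck
  have hXk : ∀ x : X, χ (FreeGroup.of (some x)) ∈ Fdef X := by
    intro x
    have hgen : FreeGroup.of (some x) ∈ Fdef X := by
      rw [Fdef]; exact Subgroup.subset_closure ⟨x, rfl⟩
    have := hQ k _ hgen
    rwa [hcoe] at this
  have hv : χ (u * (FreeGroup.of (none : Option X))⁻¹) ∈ Fdef X := by
    have heq : χ (u * (FreeGroup.of (none : Option X))⁻¹) = f * yk⁻¹ := by
      rw [map_mul, map_inv, hχu, hχc, hzf, mul_inv_rev, ← mul_assoc, mul_assoc f,
        mul_inv_cancel, mul_one]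
    rw [heq]
    exact mul_mem hfF (inv_mem hykF)
  obtain ⟨g, hgF, hgψ⟩ := core (X := X) χ yk hXk hykF hχc _ hv
  refine ⟨g * FreeGroup.of none, ⟨g, hgF, rfl⟩, ?_⟩
  rw [hcoe]
  have e1 : χ (g * FreeGroup.of none) = χ g * χ (FreeGroup.of none) := map_mul χ _ _
  rw [e1, show χ g = χ (u * (FreeGroup.of none)⁻¹) from hgψ, map_mul, map_inv, inv_mul_cancel_right, hχu]
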